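/- Let k ≥ 1 and l be integers with k+2 ≤ l and l·k < (k+2)². Then the ℤ-submodule of ℤ^{l+1} generated by the vectors e₁ − e_i, for 2 ≤ i ≤ l, together with the vector e₀ − (e₁ + ⋯ + e_{k+2}), is exactly the sublattice {v ∈ ℤ^{l+1} : B(v, ω') = 0}. -/

import Mathlib

/-- The standard basis vector `e_n` of `ℤ^{l+1}` (for `n ≤ l`). -/
def unitVec (l n : ℕ) : Fin (l + 1) → ℤ :=
  fun i => if (i : ℕ) = n then 1 else 0

/-- The symmetric bilinear form on `ℤ^{l+1}` with `B(e₀,e₀) = k`, `B(eᵢ,eᵢ) = -1` for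
`1 ≤ i ≤ l`, and `B(eᵢ,eⱼ) = 0` for `i ≠ j`. -/
def bformZ (k l : ℕ) (v w : Fin (l + 1) → ℤ) : ℤ :=
  ((k : ℤ) + 1) * (v 0 * w 0) - ∑ i, v i * w i

/-- The vector `ω' = -(k+2)·e₀ + k·(e₁ + ⋯ + e_l)`. -/
def omegaZ (k l : ℕ) : Fin (l + 1) → ℤ :=
  fun i => if i = 0 then -((k : ℤ) + 2) else (k : ℤ)

lemma sum_unitVec (l n : ℕ) (h : n ≤ l) : ∑ j, unitVec l n j = 1 := by
  unfold unitVec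
  rw [Finset.sum_eq_single (⟨n, by omega⟩ : Fin (l + 1))]
  · simp
  · intro b _ hb
    simp only [ite_eq_right_iff]
    intro hbv
    exact absurd (Fin.ext hbv) hb
  · simp

lemma bform_eq (k l : ℕ) (v : Fin (l + 1) → ℤ) :
    bformZ k l v (omegaZ k l) = -(k : ℤ) * (((k : ℤ) + 1) * v 0 + ∑ i, v i) := by
  unfold bformZ
  have h1 : ∀ i : Fin (l + 1),
      v i * omegaZ k l i = (k : ℤ) * v i + (if i = 0 then (-(2 * (k : ℤ) + 2)) * v 0 else 0) := by
    intro i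
    unfold omegaZ
    split
    · rename_i h; subst h; ring
    · ring
  rw [Finset.sum_congr rfl fun i _ => h1 i, Finset.sum_add_distrib, ← Finset.mul_sum,
    Finset.sum_ite_eq']
  simp only [Finset.mem_univ, if_true]
  have : omegaZ k l 0 = -((k : ℤ) + 2) := by simp [omegaZ]
  rw [this]
  ring

lemma bform_zero_iff (k l : ℕ) (hk : 1 ≤ k) (v : Fin (l + 1) → ℤ) :
    bformZ k l v (omegaZ k l) = 0 ↔ ((k : ℤ) + 1) * v 0 + ∑ i, v i = 0 := by
  rw [bform_eq]
  constructor
  · intro h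
    rcases mul_eq_zero.mp h with h | h
    · exfalso; omega
    · exact h
  · intro h; rw [h, mul_zero]

/-- For `k+2 ≤ l` and `l·k < (k+2)²`, the `ℤ`-submodule of `ℤ^{l+1}` generated by
the vectors `e₁ - eᵢ` (for `2 ≤ i ≤ l`) together with `e₀ - (e₁ + ⋯ + e_{k+2})` is
exactly the sublattice of vectors orthogonal to `ω'`. -/
theorem span_generators_eq_orthogonal_lattice (k l : ℕ) (hk : 1 ≤ k)
    (hl : k + 2 ≤ l) (hdeg : l * k < (k + 2) ^ 2) :
    (Submodule.span ℤ
        ({v : Fin (l + 1) → ℤ | ∃ i : ℕ, 2 ≤ i ∧ i ≤ l ∧ v = unitVec l 1 - unitVec l i} ∪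
          {unitVec l 0 - ∑ i ∈ Finset.Icc 1 (k + 2), unitVec l i}) : Set (Fin (l + 1) → ℤ))
      = {v | bformZ k l v (omegaZ k l) = 0} := by
  apply Set.Subset.antisymm
  · -- span ⊆ orthogonal
    have hsub : ({v : Fin (l + 1) → ℤ | ∃ i : ℕ, 2 ≤ i ∧ i ≤ l ∧ v = unitVec l 1 - unitVec l i} ∪
        {unitVec l 0 - ∑ i ∈ Finset.Icc 1 (k + 2), unitVec l i}) ⊆
        {v | bformZ k l v (omegaZ k l) = 0} := by
      rintro v (⟨i, hi2, hil, rfl⟩ | hv)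
      · rw [Set.mem_setOf_eq, bform_zero_iff k l hk]
        have h0 : (unitVec l 1 - unitVec l i) 0 = 0 := by
          simp [unitVec]; omega
        have hs : ∑ j, (unitVec l 1 - unitVec l i) j = 0 := by
          simp only [Pi.sub_apply, Finset.sum_sub_distrib]
          rw [sum_unitVec l 1 (by omega), sum_unitVec l i hil]
          ring
        rw [h0, hs]; ring
      · simp only [Set.mem_singleton_iff] at hv
        subst hv
        rw [Set.mem_setOf_eq, bform_zero_iff k l hk]
        have h0 : (unitVec l 0 - ∑ i ∈ Finset.Icc 1 (k + 2), unitVec l i) 0 = 1 := by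
          simp only [Pi.sub_apply, Finset.sum_apply]
          have : ∀ i ∈ Finset.Icc 1 (k + 2), unitVec l i 0 = 0 := by
            intro i hi
            simp only [Finset.mem_Icc] at hi
            simp [unitVec]; omega
          rw [Finset.sum_congr rfl this]
          simp [unitVec]
        have hs : ∑ j, (unitVec l 0 - ∑ i ∈ Finset.Icc 1 (k + 2), unitVec l i) j
            = -((k : ℤ) + 1) := by
          simp only [Pi.sub_apply, Finset.sum_apply, Finset.sum_sub_distrib]
          rw [sum_unitVec l 0 (by omega), Finset.sum_comm]
          have : ∀ i ∈ Finset.Icc 1 (k + 2), ∑ j, unitVec l i j = 1 := by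
            intro i hi
            simp only [Finset.mem_Icc] at hi
            exact sum_unitVec l i (by omega)
          rw [Finset.sum_congr rfl this]
          simp [Nat.card_Icc]
          push_cast
          ring
        rw [h0, hs]; ring
    intro v hv
    refine Submodule.span_induction ?_ ?_ ?_ ?_ hv
    · exact fun x hx => hsub hx
    · rw [Set.mem_setOf_eq, bform_zero_iff k l hk]; simp
    · intro x y _ _ hx hy
      rw [Set.mem_setOf_eq, bform_zero_iff k l hk] at hx hy ⊢
      simp only [Pi.add_apply, Finset.sum_add_distrib]
      linarith
    · intro a x _ hx
      rw [Set.mem_setOf_eq, bform_zero_iff k l hk] at hx ⊢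
      simp only [Pi.smul_apply, smul_eq_mul, ← Finset.mul_sum]
      calc ((k:ℤ)+1) * (a * x 0) + a * ∑ i, x i
          = a * (((k:ℤ)+1) * x 0 + ∑ i, x i) := by ring
        _ = 0 := by rw [hx, mul_zero]
  · -- orthogonal ⊆ span
    intro v hv
    rw [Set.mem_setOf_eq, bform_zero_iff k l hk] at hv
    -- auxiliary functions
    set vn : ℕ → ℤ := fun i => if h : i < l + 1 then v ⟨i, h⟩ else 0 with hvn
    set c : ℕ → ℤ := fun i => -(vn i + if i ≤ k + 2 then v 0 else 0) with hc
    -- the total sum decomposition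
    have hrange : Finset.range (l + 1) = insert 0 (insert 1 (Finset.Icc 2 l)) := by
      ext x; simp only [Finset.mem_range, Finset.mem_insert, Finset.mem_Icc]; omega
    have hsum : ∑ i, v i = vn 0 + vn 1 + ∑ i ∈ Finset.Icc 2 l, vn i := by
      have h1 : ∑ i, v i = ∑ i ∈ Finset.range (l + 1), vn i := by
        rw [← Fin.sum_univ_eq_sum_range]
        refine Finset.sum_congr rfl fun i _ => ?_
        simp [hvn, i.isLt]
        intro h; exact absurd i.isLt (by omega)
      rw [h1, hrange, Finset.sum_insert (by simp), Finset.sum_insert (by simp)]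
      ring
    have hsumite : ∑ i ∈ Finset.Icc 2 l, (if i ≤ k + 2 then v 0 else 0)
        = ((k : ℤ) + 1) * v 0 := by
      have h1 : ∀ i ∈ Finset.Icc 2 l, (if i ≤ k + 2 then v 0 else 0)
          = if i ∈ Finset.Icc 2 (k + 2) then v 0 else 0 := by
        intro i hi
        simp only [Finset.mem_Icc] at hi ⊢
        split <;> split <;> first | rfl | omega
      rw [Finset.sum_congr rfl h1, Finset.sum_ite_mem]
      have h2 : Finset.Icc 2 l ∩ Finset.Icc 2 (k + 2) = Finset.Icc 2 (k + 2) := by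
        ext x; simp only [Finset.mem_inter, Finset.mem_Icc]; omega
      rw [h2, Finset.sum_const, Nat.card_Icc]
      have : k + 2 + 1 - 2 = k + 1 := by omega
      rw [this]
      push_cast
      ring
    have key : v = v 0 • (unitVec l 0 - ∑ i ∈ Finset.Icc 1 (k + 2), unitVec l i)
        + ∑ i ∈ Finset.Icc 2 l, c i • (unitVec l 1 - unitVec l i) := by
      funext j
      simp only [Pi.add_apply, Pi.smul_apply, Pi.sub_apply, Finset.sum_apply, smul_eq_mul,
        unitVec]
      rcases Nat.lt_or_ge (j : ℕ) 2 with hj | hj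
      · obtain hj0 | hj1 : (j : ℕ) = 0 ∨ (j : ℕ) = 1 := by omega
        · -- j = 0
          rw [hj0]
          have e1 : ∑ i ∈ Finset.Icc 1 (k + 2), (if (0:ℕ) = i then (1:ℤ) else 0) = 0 :=
            Finset.sum_eq_zero fun i hi => by
              simp only [Finset.mem_Icc] at hi; rw [if_neg (by omega)]
          have e2 : ∑ i ∈ Finset.Icc 2 l, c i * ((if (0:ℕ) = 1 then (1:ℤ) else 0)
              - if (0:ℕ) = i then 1 else 0) = 0 :=
            Finset.sum_eq_zero fun i hi => by
              simp only [Finset.mem_Icc] at hi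
              rw [if_neg (by omega), if_neg (by omega)]; ring
          rw [e1, e2]
          have hj00 : j = 0 := Fin.ext hj0
          rw [hj00]
          norm_num
        · -- j = 1
          rw [hj1]
          have e1 : ∑ i ∈ Finset.Icc 1 (k + 2), (if (1:ℕ) = i then (1:ℤ) else 0)
              = 1 := by
            rw [Finset.sum_ite_eq, if_pos (by simp)]
          have e2 : ∑ i ∈ Finset.Icc 2 l, c i * ((if (1:ℕ) = 1 then (1:ℤ) else 0)
              - if (1:ℕ) = i then 1 else 0) = ∑ i ∈ Finset.Icc 2 l, c i :=
            Finset.sum_congr rfl fun i hi => by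
              simp only [Finset.mem_Icc] at hi
              rw [if_pos rfl, if_neg (by omega)]; ring
          rw [e1, e2, if_neg (by omega)]
          have hcsum : ∑ i ∈ Finset.Icc 2 l, c i
              = -(∑ i ∈ Finset.Icc 2 l, vn i) - ((k : ℤ) + 1) * v 0 := by
            simp only [hc, neg_add, Finset.sum_add_distrib, Finset.sum_neg_distrib]
            rw [hsumite]
            ring
          rw [hcsum]
          have hv1 : vn 1 = v j := by
            have hje : j = ⟨1, by omega⟩ := Fin.ext hj1
            rw [hje]
            simp only [hvn]
            rw [dif_pos (show (1:ℕ) < l + 1 by omega)]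
          have hv0 : vn 0 = v 0 := by simp [hvn]
          rw [hsum, hv0, hv1] at hv
          linarith
      · -- j ≥ 2
        have hjne0 : (j : ℕ) ≠ 0 := by omega
        have hjne1 : (j : ℕ) ≠ 1 := by omega
        have e1 : ∑ i ∈ Finset.Icc 1 (k + 2), (if (j:ℕ) = i then (1:ℤ) else 0)
            = if (j:ℕ) ≤ k + 2 then 1 else 0 := by
          rw [Finset.sum_ite_eq]
          by_cases h : (j:ℕ) ≤ k + 2
          · rw [if_pos (by simp; omega), if_pos h]
          · rw [if_neg (by simp; omega), if_neg h]
        have e2 : ∑ i ∈ Finset.Icc 2 l, c i * ((if (j:ℕ) = 1 then (1:ℤ) else 0)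
            - if (j:ℕ) = i then 1 else 0) = -c (j:ℕ) := by
          have : ∀ i ∈ Finset.Icc 2 l, c i * ((if (j:ℕ) = 1 then (1:ℤ) else 0)
              - if (j:ℕ) = i then 1 else 0) = if (j:ℕ) = i then -c i else 0 := by
            intro i _
            rw [if_neg hjne1]
            split <;> ring
          rw [Finset.sum_congr rfl this, Finset.sum_ite_eq,
            if_pos (by simp only [Finset.mem_Icc]; omega)]
        rw [e1, e2, if_neg hjne0]
        have hvj : vn (j : ℕ) = v j := by simp [hvn, j.isLt]; intro h; exact absurd j.isLt (by omega)
        simp only [hc, hvj]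
        by_cases hjk : (j : ℕ) ≤ k + 2
        · rw [if_pos hjk, if_pos hjk]
          ring
        · rw [if_neg hjk, if_neg hjk]
          ring
    rw [key]
    refine Submodule.add_mem _
      (Submodule.smul_mem _ _ (Submodule.subset_span (Or.inr rfl)))
      (Submodule.sum_mem _ fun i hi => Submodule.smul_mem _ _ (Submodule.subset_span
        (Or.inl ?_)))
    simp only [Finset.mem_Icc] at hi
    exact ⟨i, hi.1, hi.2, rfl⟩
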